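/- Green's identity: for all f, g ∈ D*, ⟨A*f, g⟩ − ⟨f, A*g⟩ = Γ₁f·conj(Γ₂g) − Γ₂f·conj(Γ₁g) + ⟨f, ψ⟩⟨φ, g⟩ − ⟨f, φ⟩⟨ψ, g⟩. -/

import Mathlib

open MeasureTheory Filter

/-- The (paper-convention) `L²(ℝ)` inner product `⟨f,g⟩ = ∫ f · conj g`,
linear in the first argument. -/
noncomputable def ip (f g : ℝ → ℂ) : ℂ :=
  ∫ x : ℝ, f x * (starRingEnd ℂ) (g x)

/-- The boundary operator `Γ₁`, evaluated on `g ∈ D*` with associated constant `c = c_g`: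
`Γ₁ g = ∫_ℝ ( g(x) − c·sign(x)·(x²+1)^{−1/2} ) dx`. -/
noncomputable def Gam1 (g : ℝ → ℂ) (c : ℂ) : ℂ :=
  ∫ x : ℝ, (g x - c * ((Real.sign x : ℝ) : ℂ) * (((Real.sqrt (x ^ 2 + 1) : ℝ) : ℂ))⁻¹)

lemma l2_mul_integrable {u v : ℝ → ℂ} (hu : MemLp u 2 (volume : Measure ℝ))
    (hv : MemLp v 2 (volume : Measure ℝ)) :
    Integrable (fun x => u x * v x) (volume : Measure ℝ) := by
  have h : MemLp (u • v) 1 (volume : Measure ℝ) :=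
    hv.smul hu
  rw [memLp_one_iff_integrable] at h
  exact h

-- conjugate of an L² function is L²
lemma l2_conj {u : ℝ → ℂ} {p : ENNReal} (hu : MemLp u p (volume : Measure ℝ)) :
    MemLp (fun x => (starRingEnd ℂ) (u x)) p (volume : Measure ℝ) :=
  hu.of_le (RCLike.continuous_conj.comp_aestronglyMeasurable hu.1) (Filter.Eventually.of_forall fun x => by simp)

lemma ip_conj (u v : ℝ → ℂ) : (starRingEnd ℂ) (ip u v) = ip v u := by
  rw [ip, ← integral_conj]
  unfold ip
  congr 1; funext x; simp [mul_comm]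

lemma measurable_rsign : Measurable Real.sign := by
  unfold Real.sign
  exact Measurable.ite (measurableSet_lt measurable_id measurable_const) measurable_const
    (Measurable.ite (measurableSet_lt measurable_const measurable_id) measurable_const
      measurable_const)

lemma memℒp_w1 : MemLp (fun x : ℝ => ((x / (x ^ 2 + 1) : ℝ) : ℂ)) 2 (volume : Measure ℝ) := by
  have hmw : Measurable fun x : ℝ => x / (x ^ 2 + 1) := by fun_prop
  have hmc : Measurable fun x : ℝ => ((x / (x ^ 2 + 1) : ℝ) : ℂ) := fun s hs =>
    Complex.measurable_ofReal.comp hmw hs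
  rw [memLp_two_iff_integrable_sq_norm hmc.aestronglyMeasurable]
  apply Integrable.mono integrable_inv_one_add_sq
    ((hmc.norm.pow_const 2).aestronglyMeasurable)
  filter_upwards with x
  simp only [Real.norm_eq_abs, Complex.norm_real]
  rw [abs_of_nonneg (by positivity), abs_of_nonneg (by positivity : (0:ℝ) ≤ (1 + x ^ 2)⁻¹),
    sq_abs, div_pow, inv_eq_one_div, div_le_div_iff₀ (by positivity) (by positivity)]
  nlinarith [sq_nonneg x, sq_nonneg (x ^ 2)]

lemma memℒp_w2 : MemLp (fun x : ℝ => (((x ^ 2 + 1)⁻¹ : ℝ) : ℂ)) 2 (volume : Measure ℝ) := by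
  have hmw : Measurable fun x : ℝ => (x ^ 2 + 1)⁻¹ := by fun_prop
  have hmc : Measurable fun x : ℝ => (((x ^ 2 + 1)⁻¹ : ℝ) : ℂ) := fun s hs =>
    Complex.measurable_ofReal.comp hmw hs
  rw [memLp_two_iff_integrable_sq_norm hmc.aestronglyMeasurable]
  apply Integrable.mono integrable_inv_one_add_sq
    ((hmc.norm.pow_const 2).aestronglyMeasurable)
  filter_upwards with x
  simp only [Real.norm_eq_abs, Complex.norm_real]
  rw [abs_of_nonneg (by positivity), abs_of_nonneg (by positivity : (0:ℝ) ≤ (1 + x ^ 2)⁻¹),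
    sq_abs, inv_pow, inv_le_inv₀ (by positivity) (by positivity)]
  nlinarith [sq_nonneg x, sq_nonneg (x ^ 2)]
lemma integrable_rfun : Integrable
    (fun x : ℝ => (((x - Real.sign x * Real.sqrt (x ^ 2 + 1)) / (x ^ 2 + 1) : ℝ) : ℂ))
    (volume : Measure ℝ) := by
  have hm : Measurable (fun x : ℝ =>
      ((x - Real.sign x * Real.sqrt (x ^ 2 + 1)) / (x ^ 2 + 1) : ℝ)) := by
    apply Measurable.div
    · exact measurable_id.sub (measurable_rsign.mul
        ((Real.continuous_sqrt.comp (by continuity)).measurable))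
    · fun_prop
  apply Integrable.mono integrable_inv_one_add_sq
    (show Measurable fun x : ℝ =>
      (((x - Real.sign x * Real.sqrt (x ^ 2 + 1)) / (x ^ 2 + 1) : ℝ) : ℂ) from
      fun s hs => Complex.measurable_ofReal.comp hm hs).aestronglyMeasurable
  filter_upwards with x
  have h1 : (0:ℝ) < x ^ 2 + 1 := by positivity
  have ht : (0:ℝ) < Real.sqrt (x ^ 2 + 1) := Real.sqrt_pos.2 h1
  have ht2 : Real.sqrt (x ^ 2 + 1) ^ 2 = x ^ 2 + 1 := Real.sq_sqrt h1.le
  have hnum : |x - Real.sign x * Real.sqrt (x ^ 2 + 1)| ≤ 1 := by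
    rcases lt_trichotomy x 0 with hx | hx | hx
    · rw [Real.sign_of_neg hx]
      rw [abs_le]
      constructor <;> nlinarith [Real.sqrt_nonneg (x ^ 2 + 1)]
    · simp [hx, Real.sign_zero]
    · rw [Real.sign_of_pos hx]
      rw [abs_le]
      constructor <;> nlinarith [Real.sqrt_nonneg (x ^ 2 + 1)]
  simp only [Function.comp_apply, Real.norm_eq_abs, Complex.norm_real]
  rw [abs_div, abs_of_nonneg h1.le, abs_of_nonneg (by positivity : (0:ℝ) ≤ (1 + x ^ 2)⁻¹),
    show (1 + x ^ 2)⁻¹ = 1 / (x ^ 2 + 1) by rw [one_div, add_comm]]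
  exact (div_le_div_iff_of_pos_right h1).2 hnum

lemma key_integrable {u : ℝ → ℂ} {c : ℂ} (hu : MemLp u 2 (volume : Measure ℝ))
    (hcu : MemLp (fun x : ℝ => (x : ℂ) * u x - c) 2 (volume : Measure ℝ)) :
    Integrable (fun x : ℝ =>
      u x - c * ((Real.sign x : ℝ) : ℂ) * (((Real.sqrt (x ^ 2 + 1) : ℝ) : ℂ))⁻¹)
      (volume : Measure ℝ) := by
  have heq : (fun x : ℝ =>
      u x - c * ((Real.sign x : ℝ) : ℂ) * (((Real.sqrt (x ^ 2 + 1) : ℝ) : ℂ))⁻¹)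
      = fun x : ℝ => (((x : ℂ) * u x - c) * ((x / (x ^ 2 + 1) : ℝ) : ℂ)
          + u x * (((x ^ 2 + 1)⁻¹ : ℝ) : ℂ))
        + c * (((x - Real.sign x * Real.sqrt (x ^ 2 + 1)) / (x ^ 2 + 1) : ℝ) : ℂ) := by
    funext x
    have h1 : (0:ℝ) < x ^ 2 + 1 := by positivity
    have ht : (0:ℝ) < Real.sqrt (x ^ 2 + 1) := Real.sqrt_pos.2 h1
    have ht2 : ((Real.sqrt (x ^ 2 + 1) : ℝ) : ℂ) ^ 2 = (x : ℂ) ^ 2 + 1 := by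
      norm_cast
      exact Real.sq_sqrt h1.le
    have htne : ((Real.sqrt (x ^ 2 + 1) : ℝ) : ℂ) ≠ 0 := by
      exact_mod_cast ht.ne'
    have h1c : ((x : ℂ) ^ 2 + 1) ≠ 0 := by
      rw [← ht2]; exact pow_ne_zero 2 htne
    push_cast
    field_simp
    ring_nf
    ring_nf at ht2
    linear_combination (c * ((Real.sign x : ℝ) : ℂ)) * ht2
  rw [heq]
  exact ((l2_mul_integrable hcu memℒp_w1).add (l2_mul_integrable hu memℒp_w2)).add
    (integrable_rfun.const_mul c)

lemma integrable_conj {h : ℝ → ℂ} (hh : Integrable h (volume : Measure ℝ)) :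
    Integrable (fun x => (starRingEnd ℂ) (h x)) (volume : Measure ℝ) := by
  rw [← memLp_one_iff_integrable] at hh ⊢
  exact l2_conj hh

theorem stmt15 (φ ψ : ℝ → ℂ)
    (hφ : MemLp φ 2 (volume : Measure ℝ)) (hψ : MemLp ψ 2 (volume : Measure ℝ))
    (f g : ℝ → ℂ) (cf cg : ℂ)
    (hf : MemLp f 2 (volume : Measure ℝ))
    (hcf : MemLp (fun x : ℝ => (x : ℂ) * f x - cf) 2 (volume : Measure ℝ))
    (hg : MemLp g 2 (volume : Measure ℝ))
    (hcg : MemLp (fun x : ℝ => (x : ℂ) * g x - cg) 2 (volume : Measure ℝ)) :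
    -- `⟨A*f, g⟩ − ⟨f, A*g⟩
    --    = Γ₁f·conj(Γ₂g) − Γ₂f·conj(Γ₁g) + ⟨f,ψ⟩⟨φ,g⟩ − ⟨f,φ⟩⟨ψ,g⟩`
    ip (fun x : ℝ => ((x : ℂ) * f x - cf) + ip f ψ * φ x) g -
        ip f (fun x : ℝ => ((x : ℂ) * g x - cg) + ip g ψ * φ x) =
      Gam1 f cf * (starRingEnd ℂ) cg - cf * (starRingEnd ℂ) (Gam1 g cg) +
        ip f ψ * ip φ g - ip f φ * ip ψ g := by
  have hgc := l2_conj hg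
  have hFg : Integrable (fun x : ℝ => ((x : ℂ) * f x - cf) * (starRingEnd ℂ) (g x))
      (volume : Measure ℝ) := l2_mul_integrable hcf hgc
  have hφg : Integrable (fun x : ℝ => φ x * (starRingEnd ℂ) (g x)) (volume : Measure ℝ) :=
    l2_mul_integrable hφ hgc
  have hfG : Integrable (fun x : ℝ => f x * (starRingEnd ℂ) ((x : ℂ) * g x - cg))
      (volume : Measure ℝ) := l2_mul_integrable hf (l2_conj hcg)
  have hfφ : Integrable (fun x : ℝ => f x * (starRingEnd ℂ) (φ x)) (volume : Measure ℝ) :=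
    l2_mul_integrable hf (l2_conj hφ)
  have hkf := key_integrable hf hcf
  have hkg := key_integrable hg hcg
  have e1 : ∀ a : ℂ, ip (fun x : ℝ => ((x : ℂ) * f x - cf) + a * φ x) g
      = (∫ x : ℝ, ((x : ℂ) * f x - cf) * (starRingEnd ℂ) (g x)) + a * ip φ g := by
    intro a
    simp only [ip]
    rw [← integral_const_mul, ← integral_add hFg (hφg.const_mul a)]
    congr 1; funext x; ring
  have e2 : ∀ b : ℂ, ip f (fun x : ℝ => ((x : ℂ) * g x - cg) + b * φ x)
      = (∫ x : ℝ, f x * (starRingEnd ℂ) ((x : ℂ) * g x - cg))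
        + (starRingEnd ℂ) b * ip f φ := by
    intro b
    simp only [ip]
    rw [← integral_const_mul, ← integral_add hfG (hfφ.const_mul _)]
    congr 1; funext x
    rw [map_add, map_mul]; ring
  have mid : (∫ x : ℝ, ((x : ℂ) * f x - cf) * (starRingEnd ℂ) (g x))
      - (∫ x : ℝ, f x * (starRingEnd ℂ) ((x : ℂ) * g x - cg))
      = Gam1 f cf * (starRingEnd ℂ) cg - cf * (starRingEnd ℂ) (Gam1 g cg) := by
    rw [← integral_sub hFg hfG]
    have hpt : (fun x : ℝ => ((x : ℂ) * f x - cf) * (starRingEnd ℂ) (g x)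
          - f x * (starRingEnd ℂ) ((x : ℂ) * g x - cg))
        = fun x : ℝ =>
          (f x - cf * ((Real.sign x : ℝ) : ℂ) * (((Real.sqrt (x ^ 2 + 1) : ℝ) : ℂ))⁻¹)
            * (starRingEnd ℂ) cg
          - cf * (starRingEnd ℂ)
              (g x - cg * ((Real.sign x : ℝ) : ℂ) * (((Real.sqrt (x ^ 2 + 1) : ℝ) : ℂ))⁻¹) := by
      funext x
      simp only [map_sub, map_mul, map_inv₀, Complex.conj_ofReal]
      ring
    rw [hpt, integral_sub (hkf.mul_const _) ((integrable_conj hkg).const_mul cf),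
      integral_mul_const, integral_const_mul, integral_conj]
    rfl
  rw [e1 (ip f ψ), e2 (ip g ψ), ip_conj g ψ, ← mid]
  ring
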